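/- arXiv:2203.00486 — 2 statements merged into one kernel-verified Lean document; each statement's English description precedes it below -/
import Mathlib

section
/- Let a > 0, M > 0, and let U : ℝ → ℝ be continuous with 0 < U(x) ≤ M for all x ∈ ℝ. Let τ : [0,∞) → ℝ be twice continuously differentiable with τ(0) = 0, τ'(0) = 1/a², and τ''(t) = −8(τ'(t))² U(τ(t)) for all t ≥ 0. Then for every τᶠ > 0 there exists T ≥ 0 such that τ(T) = τᶠ. -/
/-- Finite-time attainment: a globally defined solution of `τ'' = −8(τ')²U(τ)` on `[0,∞)`
with `τ(0) = 0`, `τ'(0) = 1/a²` and `0 < U ≤ M` continuous reaches every prescribed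
positive value `τᶠ` in finite time. -/
theorem stmt_4 (a M : ℝ) (ha : 0 < a) (hM : 0 < M)
    (U : ℝ → ℝ) (hUc : Continuous U) (hUpos : ∀ x, 0 < U x) (hUle : ∀ x, U x ≤ M)
    (τ τ' τ'' : ℝ → ℝ)
    (hτ' : ∀ t ∈ Set.Ici (0:ℝ), HasDerivWithinAt τ (τ' t) (Set.Ici 0) t)
    (hτ'' : ∀ t ∈ Set.Ici (0:ℝ), HasDerivWithinAt τ' (τ'' t) (Set.Ici 0) t)
    (hτ''c : ContinuousOn τ'' (Set.Ici 0))
    (h0 : τ 0 = 0) (h1 : τ' 0 = 1 / a ^ 2)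
    (hode : ∀ t ∈ Set.Ici (0:ℝ), τ'' t = -8 * (τ' t) ^ 2 * U (τ t)) :
    ∀ τf : ℝ, 0 < τf → ∃ T : ℝ, 0 ≤ T ∧ τ T = τf := by
  intro τf hτf
  -- the antiderivative of U
  set V : ℝ → ℝ := fun x => ∫ u in (0:ℝ)..x, U u with hVdef
  have hV : ∀ x, HasDerivAt V (U x) x := fun x =>
    (hUc.integral_hasStrictDerivAt 0 x).hasDerivAt
  have hV0 : V 0 = 0 := intervalIntegral.integral_same
  -- the conserved quantity F = τ' · exp(8 V(τ))
  set F : ℝ → ℝ := fun t => τ' t * Real.exp (8 * V (τ t)) with hFdef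
  have hF : ∀ t ∈ Set.Ici (0:ℝ), HasDerivWithinAt F 0 (Set.Ici 0) t := by
    intro t ht
    have hinner : HasDerivWithinAt (fun s => 8 * V (τ s)) (8 * (U (τ t) * τ' t))
        (Set.Ici 0) t := ((hV (τ t)).comp_hasDerivWithinAt t (hτ' t ht)).const_mul 8
    have hexp : HasDerivWithinAt (fun s => Real.exp (8 * V (τ s)))
        (Real.exp (8 * V (τ t)) * (8 * (U (τ t) * τ' t))) (Set.Ici 0) t := hinner.exp
    have hmul := (hτ'' t ht).mul hexp
    refine hmul.congr_deriv ?_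
    rw [hode t ht]
    ring
  -- F is constant, equal to 1/a²
  have hFconst : ∀ t, 0 ≤ t → F t = 1 / a ^ 2 := by
    intro t ht
    have hc := constant_of_has_deriv_right_zero (f := F) (a := 0) (b := t)
      (fun s hs => (hF s hs.1).continuousWithinAt.mono Set.Icc_subset_Ici_self)
      (fun s hs => (hF s hs.1).mono (Set.Ici_subset_Ici.mpr hs.1)) t
      (Set.mem_Icc.mpr ⟨ht, le_refl t⟩)
    rw [hc]
    simp [hFdef, h0, h1, hV0]
  have ha2 : (0:ℝ) < 1 / a ^ 2 := by positivity
  have hτ'eq : ∀ t, 0 ≤ t → τ' t = 1 / a ^ 2 * Real.exp (-(8 * V (τ t))) := by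
    intro t ht
    have h := hFconst t ht
    have hexpne : Real.exp (8 * V (τ t)) ≠ 0 := (Real.exp_pos _).ne'
    rw [hFdef] at h
    simp only at h
    have h' : τ' t = 1 / a ^ 2 * (Real.exp (8 * V (τ t)))⁻¹ := by
      rw [← h]
      field_simp
    rw [h', Real.exp_neg]
  -- bound: V x ≤ M * τf whenever x ≤ τf
  have hVbound : ∀ x, x ≤ τf → V x ≤ M * τf := by
    intro x hx
    have hMτf : 0 ≤ M * τf := le_of_lt (mul_pos hM hτf)
    rcases le_or_gt 0 x with hx0 | hx0
    · have h1' : V x ≤ M * x := by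
        have hmono := intervalIntegral.integral_mono_on hx0
          (hUc.intervalIntegrable 0 x) ((intervalIntegrable_const : IntervalIntegrable (fun _ => M) MeasureTheory.volume 0 x))
          (fun u _ => hUle u)
        simpa [hVdef, smul_eq_mul, mul_comm] using hmono
      nlinarith
    · have h1' : V x ≤ 0 := by
        have hnn : 0 ≤ ∫ u in x..(0:ℝ), U u :=
          intervalIntegral.integral_nonneg hx0.le (fun u _ => (hUpos u).le)
        have hsym : V x = -∫ u in x..(0:ℝ), U u := by
          exact intervalIntegral.integral_symm x 0
        linarith
      linarith
  -- the lower bound on the velocity while τ ≤ τf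
  set c : ℝ := 1 / a ^ 2 * Real.exp (-(8 * (M * τf))) with hcdef
  have hc : 0 < c := by positivity
  have hτ'ge : ∀ t, 0 ≤ t → τ t ≤ τf → c ≤ τ' t := by
    intro t ht htf
    rw [hτ'eq t ht, hcdef]
    have : Real.exp (-(8 * (M * τf))) ≤ Real.exp (-(8 * V (τ t))) := by
      apply Real.exp_le_exp.mpr
      have := hVbound (τ t) htf
      linarith
    nlinarith [Real.exp_pos (-(8 * V (τ t)))]
  have hτcont : ContinuousOn τ (Set.Ici 0) := fun t ht => (hτ' t ht).continuousWithinAt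
  set T₀ : ℝ := (τf + 1) / c with hT₀def
  have hT₀pos : 0 < T₀ := by positivity
  by_cases hex : ∃ s ∈ Set.Icc (0:ℝ) T₀, τf ≤ τ s
  · obtain ⟨s, hs, hsτ⟩ := hex
    have hivt := intermediate_value_Icc hs.1
      (hτcont.mono (Set.Icc_subset_Ici_self.trans (by rw [Set.Ici_subset_Ici])))
    have hmem : τf ∈ Set.Icc (τ 0) (τ s) := by
      rw [h0]; exact ⟨hτf.le, hsτ⟩
    obtain ⟨T, hT, hTτ⟩ := hivt hmem
    exact ⟨T, hT.1, hTτ⟩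
  · exfalso
    push_neg at hex
    -- on [0, T₀], τ < τf so τ' ≥ c, hence τ T₀ ≥ c T₀ = τf + 1 > τf
    have hIcc : Set.Icc (0:ℝ) T₀ ⊆ Set.Ici 0 := Set.Icc_subset_Ici_self
    have hgrow := Convex.mul_sub_le_image_sub_of_le_deriv (convex_Icc 0 T₀) (f := τ)
      (hτcont.mono hIcc)
      (fun x hx => by
        rw [interior_Icc] at hx
        exact ((hτ' x (le_of_lt hx.1)).hasDerivAt (Ici_mem_nhds hx.1)).differentiableAt.differentiableWithinAt)
      (C := c)
      (fun x hx => by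
        rw [interior_Icc] at hx
        rw [((hτ' x (le_of_lt hx.1)).hasDerivAt (Ici_mem_nhds hx.1)).deriv]
        exact hτ'ge x hx.1.le (le_of_lt (hex x ⟨hx.1.le, hx.2.le⟩)))
      0 ⟨le_refl 0, hT₀pos.le⟩ T₀ ⟨hT₀pos.le, le_refl T₀⟩ hT₀pos.le
    rw [h0, sub_zero, sub_zero, hT₀def, mul_div_cancel₀ _ hc.ne'] at hgrow
    have := hex T₀ ⟨hT₀pos.le, le_refl T₀⟩
    linarith
end

section
/- Let c > 0 with c ≠ 1. Then ∫₀^{π/2} log(c·cos²θ + c⁻¹·sin²θ) dθ > 0. -/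
open Real intervalIntegral

lemma aux_pos (c : ℝ) (hc : 0 < c) (θ : ℝ) :
    0 < c * Real.cos θ ^ 2 + c⁻¹ * Real.sin θ ^ 2 := by
  have h1 := Real.sin_sq_add_cos_sq θ
  rcases eq_or_ne (Real.sin θ) 0 with h | h
  · have : Real.cos θ ^ 2 = 1 := by nlinarith
    rw [h, this]; simpa using hc
  · have hs : 0 < Real.sin θ ^ 2 := by positivity
    have := mul_pos (inv_pos.mpr hc) hs
    nlinarith [mul_nonneg hc.le (sq_nonneg (Real.cos θ))]

/-- For `c > 0`, `c ≠ 1`, the angular entropy-production integral is strictly positive: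
`∫₀^{π/2} log(c·cos²θ + c⁻¹·sin²θ) dθ > 0`. -/
theorem stmt_8 (c : ℝ) (hc : 0 < c) (hc1 : c ≠ 1) :
    0 < ∫ θ in (0:ℝ)..(Real.pi / 2),
      Real.log (c * Real.cos θ ^ 2 + c⁻¹ * Real.sin θ ^ 2) := by
  have hπ : (0:ℝ) < Real.pi / 2 := by positivity
  set g : ℝ → ℝ := fun θ => (Real.cos θ ^ 2 - Real.sin θ ^ 2) * Real.log c with hg
  have hint : ∫ θ in (0:ℝ)..(Real.pi / 2), g θ = 0 := by
    simp only [hg, sub_mul]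
    rw [intervalIntegral.integral_sub, intervalIntegral.integral_mul_const,
      intervalIntegral.integral_mul_const, integral_cos_sq, integral_sin_sq]
    · simp
    · exact (Continuous.intervalIntegrable (by fun_prop) _ _)
    · exact (Continuous.intervalIntegrable (by fun_prop) _ _)
  conv_lhs => rw [← hint]
  apply intervalIntegral.integral_lt_integral_of_continuousOn_of_le_of_exists_lt hπ
  · fun_prop
  · apply ContinuousOn.log
    · fun_prop
    · intro x _; exact (aux_pos c hc x).ne'
  · intro x _
    have hconc := strictConcaveOn_log_Ioi.concaveOn.2 (Set.mem_Ioi.mpr hc)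
      (Set.mem_Ioi.mpr (inv_pos.mpr hc)) (sq_nonneg (Real.cos x)) (sq_nonneg (Real.sin x))
      (by nlinarith [Real.sin_sq_add_cos_sq x])
    simp only [smul_eq_mul] at hconc
    have hlogi : Real.log c⁻¹ = -Real.log c := Real.log_inv c
    calc g x = Real.cos x ^ 2 * Real.log c + Real.sin x ^ 2 * Real.log c⁻¹ := by
          rw [hlogi]; ring
      _ ≤ Real.log (Real.cos x ^ 2 * c + Real.sin x ^ 2 * c⁻¹) := hconc
      _ = _ := by ring_nf
  · refine ⟨Real.pi / 4, ⟨by positivity, by linarith [Real.pi_pos]⟩, ?_⟩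
    have hcos : Real.cos (Real.pi / 4) ^ 2 = 1 / 2 := by
      rw [Real.cos_pi_div_four]; norm_num [div_pow]
    have hsin : Real.sin (Real.pi / 4) ^ 2 = 1 / 2 := by
      rw [Real.sin_pi_div_four]; norm_num [div_pow]
    have hg0 : g (Real.pi / 4) = 0 := by rw [hg]; simp [hcos, hsin]
    rw [hg0, hcos, hsin]
    apply Real.log_pos
    have hne : c - 1 ≠ 0 := sub_ne_zero.mpr hc1
    have h2 : 0 < (c - 1) ^ 2 := by positivity
    nlinarith [mul_pos (inv_pos.mpr hc) h2, mul_inv_cancel₀ hc.ne']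
end
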